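/- In any orthomodular lattice, the join can be expressed by the Sasaki implication alone: a ∪ b = (a →₁ b) →₁ (((a →₁ b) →₁ (b →₁ a)) →₁ a), where a →₁ b := a' ∪ (a∩b). -/
import Mathlib


/-- An ortholattice as an algebra ⟨α, ', ∪, ∩⟩ with join `j` and
orthocomplement `c` primitive, and meet defined by De Morgan. -/
structure OrthoLattice (α : Type*) where
  j : α → α → α
  c : α → α
  j_comm : ∀ a b, j a b = j b a
  j_assoc : ∀ a b d, j (j a b) d = j a (j b d)
  c_invol : ∀ a, c (c a) = a
  j_top : ∀ a b, j a (j b (c b)) = j b (c b)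
  absorb : ∀ a b, j a (c (j (c a) (c b))) = a

namespace OrthoLattice

variable {α : Type*}

/-- meet: a ∩ b = (a' ∪ b')' -/
def m (L : OrthoLattice α) (a b : α) : α := L.c (L.j (L.c a) (L.c b))

/-- the unit 1 = a ∪ a' -/
def one (L : OrthoLattice α) (a : α) : α := L.j a (L.c a)

/-- quantum equivalence a ≡ b = (a∩b) ∪ (a'∩b') -/
def equiv (L : OrthoLattice α) (a b : α) : α := L.j (L.m a b) (L.m (L.c a) (L.c b))

/-- classical equivalence a ≡₀ b = (a'∪b) ∩ (a∪b') -/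
def equiv0 (L : OrthoLattice α) (a b : α) : α := L.m (L.j (L.c a) b) (L.j a (L.c b))

/-- Sasaki hook a →₁ b = a' ∪ (a ∩ b) -/
def sasaki (L : OrthoLattice α) (a b : α) : α := L.j (L.c a) (L.m a b)

end OrthoLattice

namespace OrthoLattice

variable {α : Type*} {L : OrthoLattice α}

/-- the induced order -/
def le (L : OrthoLattice α) (a b : α) : Prop := L.j a b = b

lemma m_absorb (a b : α) : L.m a (L.j a b) = a := by
  have h := L.absorb (L.c a) (L.c b)
  rw [L.c_invol, L.c_invol] at h
  show L.c (L.j (L.c a) (L.c (L.j a b))) = a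
  rw [h, L.c_invol]

lemma j_absorb (a b : α) : L.j a (L.m a b) = a := L.absorb a b

lemma j_idem (a : α) : L.j a a = a := by
  have h := j_absorb (L := L) a (L.j a a)
  rwa [m_absorb] at h

lemma le_refl (a : α) : L.le a a := j_idem a

lemma le_trans {a b d : α} (h1 : L.le a b) (h2 : L.le b d) : L.le a d := by
  unfold le at *
  rw [← h2, ← L.j_assoc, h1]

lemma le_antisymm {a b : α} (h1 : L.le a b) (h2 : L.le b a) : a = b := by
  unfold le at *
  rw [← h1, L.j_comm, h2]

lemma le_sup_left (a b : α) : L.le a (L.j a b) := by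
  unfold le
  rw [← L.j_assoc, j_idem]

lemma le_sup_right (a b : α) : L.le b (L.j a b) := by
  unfold le
  rw [L.j_comm a b, ← L.j_assoc, j_idem]

lemma sup_le {a b x : α} (h1 : L.le a x) (h2 : L.le b x) : L.le (L.j a b) x := by
  unfold le at *
  rw [L.j_assoc, h2, h1]

lemma m_comm (a b : α) : L.m a b = L.m b a := by
  unfold m
  rw [L.j_comm]

lemma c_antitone {a b : α} (h : L.le a b) : L.le (L.c b) (L.c a) := by
  have e : L.m (L.c b) (L.c a) = L.c b := by
    show L.c (L.j (L.c (L.c b)) (L.c (L.c a))) = L.c b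
    rw [L.c_invol, L.c_invol, L.j_comm, h]
  -- from m x y = x deduce le x y
  have h2 := j_absorb (L := L) (L.c a) (L.c b)
  rw [m_comm, e] at h2
  unfold le
  rw [L.j_comm]
  exact h2

lemma le_of_c_le {a b : α} (h : L.le (L.c b) (L.c a)) : L.le a b := by
  have h2 := c_antitone h
  rwa [L.c_invol, L.c_invol] at h2

lemma c_j (a b : α) : L.c (L.j a b) = L.m (L.c a) (L.c b) := by
  show _ = L.c (L.j (L.c (L.c a)) (L.c (L.c b)))
  rw [L.c_invol, L.c_invol]

lemma c_m (a b : α) : L.c (L.m a b) = L.j (L.c a) (L.c b) := L.c_invol _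

lemma inf_le_left (a b : α) : L.le (L.m a b) a := by
  have h := c_antitone (L := L) (le_sup_left (L.c a) (L.c b))
  rw [L.c_invol] at h
  exact h

lemma inf_le_right (a b : α) : L.le (L.m a b) b := by
  have h := c_antitone (L := L) (le_sup_right (L.c a) (L.c b))
  rw [L.c_invol] at h
  exact h

lemma le_inf {x a b : α} (h1 : L.le x a) (h2 : L.le x b) : L.le x (L.m a b) := by
  apply le_of_c_le
  rw [c_m]
  exact sup_le (c_antitone h1) (c_antitone h2)

lemma j_mono {a b a' b' : α} (h1 : L.le a a') (h2 : L.le b b') :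
    L.le (L.j a b) (L.j a' b') :=
  sup_le (le_trans h1 (le_sup_left _ _)) (le_trans h2 (le_sup_right _ _))

lemma m_mono {a b a' b' : α} (h1 : L.le a a') (h2 : L.le b b') :
    L.le (L.m a b) (L.m a' b') :=
  le_inf (le_trans (inf_le_left _ _) h1) (le_trans (inf_le_right _ _) h2)

/-- orthomodular law, order form -/
lemma om (hOM : ∀ a b : α, L.j a (L.m (L.c a) (L.j a b)) = L.j a b)
    {x y : α} (h : L.le x y) : L.j x (L.m (L.c x) y) = y := by
  have h2 := hOM x y
  unfold le at h
  rw [h] at h2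
  exact h2

/-- dual orthomodular law -/
lemma dom (hOM : ∀ a b : α, L.j a (L.m (L.c a) (L.j a b)) = L.j a b)
    {p a : α} (h : L.le p a) : L.m a (L.j (L.c a) p) = p := by
  have h1 := om hOM (c_antitone h)
  rw [L.c_invol] at h1
  have h2 := congrArg L.c h1
  rw [L.c_invol, c_j, L.c_invol, c_m, L.c_invol] at h2
  exact h2

/-- distributivity instance: p ≤ a, r ≤ a' ⟹ a ∩ (p ∪ r) = p -/
lemma lemD (hOM : ∀ a b : α, L.j a (L.m (L.c a) (L.j a b)) = L.j a b)
    {p r a : α} (hp : L.le p a) (hr : L.le r (L.c a)) :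
    L.m a (L.j p r) = p := by
  apply OrthoLattice.le_antisymm
  · have h1 : L.le (L.j p r) (L.j (L.c a) p) :=
      sup_le (le_sup_right _ _) (le_trans hr (le_sup_left _ _))
    have h2 := m_mono (le_refl a) h1
    rw [dom hOM hp] at h2
    exact h2
  · exact le_inf hp (le_sup_left p r)

end OrthoLattice

open OrthoLattice in
/-- in any orthomodular lattice,
a ∪ b = (a →₁ b) →₁ (((a →₁ b) →₁ (b →₁ a)) →₁ a). -/
theorem stmt9 {α : Type*} (L : OrthoLattice α)
    (hOM : ∀ a b : α, L.j a (L.m (L.c a) (L.j a b)) = L.j a b) :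
    ∀ a b : α, L.j a b =
      L.sasaki (L.sasaki a b)
        (L.sasaki (L.sasaki (L.sasaki a b) (L.sasaki b a)) a) := by
  intro a b
  set r : α := L.m a b with hr
  set q2 : α := L.m (L.c a) (L.c b) with hq2
  set s : α := L.sasaki a b with hs
  set t : α := L.sasaki b a with ht
  have hs_eq : s = L.j (L.c a) r := rfl
  have ht_eq : t = L.j (L.c b) r := by
    show L.j (L.c b) (L.m b a) = _
    rw [OrthoLattice.m_comm]
  -- complement of s
  have hcs : L.c s = L.m a (L.c r) := by
    rw [hs_eq, OrthoLattice.c_j, L.c_invol]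
  have hcs_le_a : L.le (L.c s) a := by
    rw [hcs]; exact OrthoLattice.inf_le_left _ _
  have hr_le_a : L.le r a := OrthoLattice.inf_le_left a b
  have hr_le_b : L.le r b := OrthoLattice.inf_le_right a b
  -- Step 1 : s ∩ t = r ∪ q2
  have hrs : L.le r s := by rw [hs_eq]; exact OrthoLattice.le_sup_right _ _
  have hrt : L.le r t := by rw [ht_eq]; exact OrthoLattice.le_sup_right _ _
  have hrcr : L.le r (L.c (L.c r)) := by rw [L.c_invol]; exact OrthoLattice.le_refl r
  have hmcrs : L.m (L.c r) s = L.c a := by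
    rw [hs_eq]
    exact OrthoLattice.lemD hOM (OrthoLattice.c_antitone hr_le_a) hrcr
  have hmcrt : L.m (L.c r) t = L.c b := by
    rw [ht_eq]
    exact OrthoLattice.lemD hOM (OrthoLattice.c_antitone hr_le_b) hrcr
  have step1 : L.m s t = L.j r q2 := by
    apply OrthoLattice.le_antisymm
    · -- s ∩ t ≤ r ∪ q2
      have h0 : L.le r (L.m s t) := OrthoLattice.le_inf hrs hrt
      have h1 := OrthoLattice.om hOM h0
      have h2 : L.le (L.m (L.c r) (L.m s t)) q2 := by
        apply OrthoLattice.le_inf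
        · have := OrthoLattice.m_mono (L := L) (OrthoLattice.le_refl (L.c r)) (OrthoLattice.inf_le_left s t)
          rwa [hmcrs] at this
        · have := OrthoLattice.m_mono (L := L) (OrthoLattice.le_refl (L.c r)) (OrthoLattice.inf_le_right s t)
          rwa [hmcrt] at this
      have h3 := OrthoLattice.j_mono (OrthoLattice.le_refl r) h2
      rw [h1] at h3
      exact h3
    · -- r ∪ q2 ≤ s ∩ t
      apply OrthoLattice.sup_le (OrthoLattice.le_inf hrs hrt)
      apply OrthoLattice.le_inf
      · rw [hs_eq]
        exact OrthoLattice.le_trans (OrthoLattice.inf_le_left _ _) (OrthoLattice.le_sup_left _ _)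
      · rw [ht_eq]
        exact OrthoLattice.le_trans (OrthoLattice.inf_le_right _ _) (OrthoLattice.le_sup_left _ _)
  set u : α := L.sasaki s t with hu
  have hu_eq : u = L.j (L.j (L.c s) r) q2 := by
    show L.j (L.c s) (L.m s t) = _
    rw [step1, L.j_assoc]
  -- Step 2 : u ∩ a = a
  have hjcsr_le_a : L.le (L.j (L.c s) r) a := OrthoLattice.sup_le hcs_le_a hr_le_a
  have hq2_le_ca : L.le q2 (L.c a) := OrthoLattice.inf_le_left _ _
  have hmua : L.m u a = a := by
    have h1 : L.m a u = L.j (L.c s) r := by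
      rw [hu_eq]
      exact OrthoLattice.lemD hOM hjcsr_le_a hq2_le_ca
    have h2 : L.j r (L.m (L.c r) a) = a := OrthoLattice.om hOM hr_le_a
    have h3 : L.j (L.c s) r = a := by
      rw [hcs, OrthoLattice.m_comm a (L.c r), L.j_comm]
      exact h2
    rw [OrthoLattice.m_comm, h1, h3]
  set v : α := L.sasaki u a with hv
  have hv_eq : v = L.j (L.c u) a := by
    show L.j (L.c u) (L.m u a) = _
    rw [hmua]
  -- Step 3 : u ∩ a' = q2
  have hmuca : L.m (L.c a) u = q2 := by
    have hp : L.le (L.j (L.c s) r) (L.c (L.c a)) := by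
      rw [L.c_invol]; exact hjcsr_le_a
    have h1 : L.m (L.c a) (L.j q2 (L.j (L.c s) r)) = q2 := OrthoLattice.lemD hOM hq2_le_ca hp
    rw [hu_eq, L.j_comm]
    exact h1
  -- Step 4 : v = a ∪ b
  have hv_ab : v = L.j a b := by
    have h1 : L.c v = q2 := by
      rw [hv_eq, OrthoLattice.c_j, L.c_invol, OrthoLattice.m_comm]
      exact hmuca
    have h2 := congrArg L.c h1
    rw [L.c_invol] at h2
    rw [h2, hq2, OrthoLattice.c_m, L.c_invol, L.c_invol]
  -- Step 5 : s →₁ v = v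
  have hcs_le_v : L.le (L.c s) v := by
    rw [hv_eq]
    exact OrthoLattice.le_trans hcs_le_a (OrthoLattice.le_sup_right _ _)
  have h5 : L.sasaki s v = v := by
    have h1 := OrthoLattice.om hOM hcs_le_v
    rw [L.c_invol] at h1
    exact h1
  rw [← hv_ab]
  exact h5.symm
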